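/- Let λ = (λ₁, λ₂, …, λ_N) be a partition with at most N parts, and let λ' be its conjugate. Then the multiset union of A = {λ'_i - i + 1/2 : 1 ≤ i ≤ N, λ'_i - i + 1/2 > 0} and B = {-λ_i + i - 1/2 : 1 ≤ i ≤ N, λ_i - i + 1/2 < 0} is exactly the set {1/2, 3/2, …, N - 1/2}; that is, A and B are disjoint and A ∪ B = {k - 1/2 : 1 ≤ k ≤ N}. -/
import Mathlib


/-- The conjugate partition: `conj N lam i = #{j : 1 ≤ j ≤ N, lam j ≥ i}`. -/
def conj (N : ℕ) (lam : ℕ → ℕ) (i : ℕ) : ℕ :=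
  ((Finset.Icc 1 N).filter (fun j => i ≤ lam j)).card

lemma conj_le (N : ℕ) (lam : ℕ → ℕ) (i : ℕ) : conj N lam i ≤ N := by
  have h := Finset.card_filter_le (Finset.Icc 1 N) (fun j => i ≤ lam j)
  simpa [conj, Nat.card_Icc] using h

lemma conj_ge (N : ℕ) (lam : ℕ → ℕ)
    (hmono : ∀ i j, 1 ≤ i → i ≤ j → j ≤ N → lam j ≤ lam i)
    {i r : ℕ} (h1 : 1 ≤ i) (h2 : i ≤ N) (h : r ≤ lam i) :
    i ≤ conj N lam r := by
  have hsub : Finset.Icc 1 i ⊆ (Finset.Icc 1 N).filter (fun j => r ≤ lam j) := by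
    intro m hm
    simp only [Finset.mem_Icc] at hm
    simp only [Finset.mem_filter, Finset.mem_Icc]
    exact ⟨⟨hm.1, hm.2.trans h2⟩, h.trans (hmono m i hm.1 hm.2 h2)⟩
  have hc := Finset.card_le_card hsub
  simpa [conj, Nat.card_Icc] using hc

lemma conj_lt (N : ℕ) (lam : ℕ → ℕ)
    (hmono : ∀ i j, 1 ≤ i → i ≤ j → j ≤ N → lam j ≤ lam i)
    {i r : ℕ} (h1 : 1 ≤ i) (h : lam i < r) :
    conj N lam r < i := by
  have hsub : (Finset.Icc 1 N).filter (fun j => r ≤ lam j) ⊆ Finset.Icc 1 (i - 1) := by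
    intro m hm
    simp only [Finset.mem_filter, Finset.mem_Icc] at hm
    simp only [Finset.mem_Icc]
    refine ⟨hm.1.1, ?_⟩
    by_contra hc
    push_neg at hc
    have him : i ≤ m := by omega
    have := hm.2.trans (hmono i m h1 him hm.1.2)
    omega
  have hc := Finset.card_le_card hsub
  simp only [Nat.card_Icc] at hc
  unfold conj
  omega

theorem stmt1 (N : ℕ) (lam : ℕ → ℕ)
    (hmono : ∀ i j, 1 ≤ i → i ≤ j → j ≤ N → lam j ≤ lam i) :
    Disjoint
      {x : ℚ | ∃ i, 1 ≤ i ∧ i ≤ N ∧ x = (conj N lam i : ℚ) - i + 1/2 ∧ 0 < x}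
      {x : ℚ | ∃ i, 1 ≤ i ∧ i ≤ N ∧ x = -(lam i : ℚ) + i - 1/2 ∧
        (lam i : ℚ) - i + 1/2 < 0} ∧
    {x : ℚ | ∃ i, 1 ≤ i ∧ i ≤ N ∧ x = (conj N lam i : ℚ) - i + 1/2 ∧ 0 < x} ∪
      {x : ℚ | ∃ i, 1 ≤ i ∧ i ≤ N ∧ x = -(lam i : ℚ) + i - 1/2 ∧
        (lam i : ℚ) - i + 1/2 < 0} =
      {x : ℚ | ∃ k, 1 ≤ k ∧ k ≤ N ∧ x = (k : ℚ) - 1/2} := by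
  constructor
  · rw [Set.disjoint_left]
    rintro x ⟨i, hi1, hiN, hxA, hxpos⟩ ⟨j, hj1, hjN, hxB, hjneg⟩
    have key : (conj N lam i : ℚ) + (lam j : ℚ) + 1 = (i : ℚ) + (j : ℚ) := by
      rw [hxA] at hxB; linarith
    have keyN : conj N lam i + lam j + 1 = i + j := by exact_mod_cast key
    by_cases hcase : lam j < i
    · have h2 := conj_lt N lam hmono hj1 hcase
      omega
    · push_neg at hcase
      have h2 := conj_ge N lam hmono hj1 hjN hcase
      omega
  · ext x
    simp only [Set.mem_union, Set.mem_setOf_eq]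
    constructor
    · rintro (⟨i, hi1, hiN, hx, hpos⟩ | ⟨j, hj1, hjN, hx, hneg⟩)
      · set c := conj N lam i with hc
        have hic : i ≤ c := by
          by_contra h
          push_neg at h
          have : (c : ℚ) + 1 ≤ (i : ℚ) := by exact_mod_cast h
          rw [hx] at hpos; linarith
        refine ⟨c - i + 1, by omega, ?_, ?_⟩
        · have := conj_le N lam i
          omega
        · have hk : ((c - i + 1 : ℕ) : ℚ) = (c : ℚ) - (i : ℚ) + 1 := by
            push_cast [Nat.cast_sub hic]; ring
          rw [hx, hk]; ring
      · have hlj : lam j < j := by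
          by_contra h
          push_neg at h
          have : (j : ℚ) ≤ (lam j : ℚ) := by exact_mod_cast h
          linarith
        refine ⟨j - lam j, by omega, by omega, ?_⟩
        have hk : ((j - lam j : ℕ) : ℚ) = (j : ℚ) - (lam j : ℚ) := by
          push_cast [Nat.cast_sub hlj.le]; ring
        rw [hx, hk]; ring
    · rintro ⟨k, hk1, hkN, hx⟩
      by_cases hex : ∃ j, j ≤ N ∧ lam j + k ≤ j
      · set j₀ := Nat.find hex with hj₀
        obtain ⟨hj₀N, hj₀le⟩ := Nat.find_spec hex
        have hj₀1 : k ≤ j₀ := by omega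
        have hmin : ∀ m, m < j₀ → m ≤ N → m < lam m + k := by
          intro m hm hmN
          have := Nat.find_min hex hm
          push_neg at this
          exact this hmN
        by_cases heq : lam j₀ + k = j₀
        · -- x ∈ B
          right
          refine ⟨j₀, by omega, hj₀N, ?_, ?_⟩
          · have hcast : (lam j₀ : ℚ) + (k : ℚ) = (j₀ : ℚ) := by exact_mod_cast heq
            rw [hx]; linarith
          · have : lam j₀ + 1 ≤ j₀ := by omega
            have hcast : (lam j₀ : ℚ) + 1 ≤ (j₀ : ℚ) := by exact_mod_cast this
            linarith
        · -- x ∈ A, with i = j₀ - k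
          left
          have hlt : lam j₀ + k < j₀ := lt_of_le_of_ne hj₀le heq
          refine ⟨j₀ - k, by omega, by omega, ?_, ?_⟩
          · have hge : j₀ - 1 ≤ conj N lam (j₀ - k) := by
              apply conj_ge N lam hmono (by omega) (by omega)
              have := hmin (j₀ - 1) (by omega) (by omega)
              omega
            have hltc : conj N lam (j₀ - k) < j₀ :=
              conj_lt N lam hmono (by omega) (by omega)
            have hceq : conj N lam (j₀ - k) + 1 = (j₀ - k) + k := by omega
            have hcast : (conj N lam (j₀ - k) : ℚ) + 1 =
                ((j₀ - k : ℕ) : ℚ) + (k : ℚ) := by exact_mod_cast hceq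
            rw [hx]; linarith
          · rw [hx]
            have : (1 : ℚ) ≤ (k : ℚ) := by exact_mod_cast hk1
            linarith
      · -- x ∈ A with i = N + 1 - k, conj = N
        push_neg at hex
        left
        have hlamN : N < lam N + k := hex N le_rfl
        refine ⟨N + 1 - k, by omega, by omega, ?_, ?_⟩
        · have hge : N ≤ conj N lam (N + 1 - k) := by
            apply conj_ge N lam hmono (by omega) le_rfl
            omega
          have hle := conj_le N lam (N + 1 - k)
          have hceq : conj N lam (N + 1 - k) + 1 = (N + 1 - k) + k := by omega
          have hcast : (conj N lam (N + 1 - k) : ℚ) + 1 =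
              ((N + 1 - k : ℕ) : ℚ) + (k : ℚ) := by exact_mod_cast hceq
          rw [hx]; linarith
        · rw [hx]
          have : (1 : ℚ) ≤ (k : ℚ) := by exact_mod_cast hk1
          linarith
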